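/- Let K be a field, S = K[x_{ij} : 1 ≤ i,j ≤ n], G a simple graph on [n] containing an edge {i,j} with i ≠ j. Then the variable x_{ji} is a nonzerodivisor on S/P_G. -/

import Mathlib

section Core
open Polynomial
variable {D : Type*} [CommRing D]

private lemma X_reg {R : Type*} [Semiring R] {p : Polynomial R}
    (h : Polynomial.X * p = 0) : p = 0 := by
  ext n
  have := congrArg (fun q => Polynomial.coeff q (n + 1)) h
  simpa [Polynomial.coeff_X_mul] using this

private lemma C_reg {R : Type*} [CommRing R] {a : R} (ha : ∀ y : R, a * y = 0 → y = 0)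
    {p : Polynomial R} (hp : Polynomial.C a * p = 0) : p = 0 := by
  ext n
  have := congrArg (fun q => Polynomial.coeff q n) hp
  simp only [Polynomial.coeff_C_mul, Polynomial.coeff_zero] at this
  simpa using ha _ this

private lemma hyp_regular (c : D) {h : Polynomial (Polynomial D)}
    (h0 : h ≠ 0) : (C (C c) - C X * X) * h ≠ 0 := by
  have : Nontrivial D := by
    by_contra hn
    rw [not_nontrivial_iff_subsingleton] at hn
    exact h0 (Subsingleton.elim _ _)
  set w : Polynomial (Polynomial D) := C (C c) - C X * X with hwdef
  have hwform : w = C (-X) * X + C (C c) := by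
    rw [hwdef, map_neg]; ring
  have hXne : (-X : Polynomial D) ≠ 0 := neg_ne_zero.mpr X_ne_zero
  have hlead : w.leadingCoeff = -X := by rw [hwform]; exact leadingCoeff_linear hXne
  intro hcontra
  have h2 := coeff_mul_degree_add_degree w h
  rw [hcontra] at h2
  simp only [coeff_zero] at h2
  rw [hlead, neg_mul] at h2
  have h3 : (X : Polynomial D) * h.leadingCoeff = 0 := neg_eq_zero.mp h2.symm
  exact (Polynomial.leadingCoeff_ne_zero.mpr h0) (X_reg h3)

private lemma core1 {c : D} (hc : ∀ y : D, c * y = 0 → y = 0)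
    {f : Polynomial (Polynomial D)} (h : (C (C c) - C X * X) ∣ X * f) :
    (C (C c) - C X * X) ∣ f := by
  obtain ⟨g, hg⟩ := h
  have h0 : (0 : Polynomial D) = C c * g.eval 0 := by
    have := congrArg (Polynomial.eval 0) hg
    simpa using this
  have hg0 : g.eval 0 = 0 := C_reg hc h0.symm
  have hXdvd : (X : Polynomial (Polynomial D)) ∣ g :=
    Polynomial.X_dvd_iff.mpr (by rwa [Polynomial.coeff_zero_eq_eval_zero])
  obtain ⟨g', hg'⟩ := hXdvd
  refine ⟨g', ?_⟩
  have key : X * f = X * ((C (C c) - C X * X) * g') := by rw [hg, hg']; ring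
  have : X * (f - (C (C c) - C X * X) * g') = 0 := by rw [mul_sub, key]; ring
  exact sub_eq_zero.mp (X_reg this)

private lemma core2 {c d : D} (hd : ∀ y : D, d * y = 0 → y = 0)
    {f : Polynomial (Polynomial D)} (h : (C (C c) - C X * X) ∣ C (C d) * f) :
    (C (C c) - C X * X) ∣ f := by
  obtain ⟨g, hg⟩ := h
  set q : D →+* D ⧸ Ideal.span {d} := Ideal.Quotient.mk (Ideal.span {d}) with hq
  set ψ : Polynomial (Polynomial D) →+* Polynomial (Polynomial (D ⧸ Ideal.span {d})) :=
    Polynomial.mapRingHom (Polynomial.mapRingHom q) with hψ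
  have hqd : q d = 0 := Ideal.Quotient.eq_zero_iff_mem.mpr (Ideal.mem_span_singleton_self d)
  have hψCCd : ψ (C (C d)) = 0 := by
    simp [hψ, Polynomial.map_C, hqd]
  have hψw : ψ (C (C c) - C X * X) = C (C (q c)) - C X * X := by
    simp [hψ, Polynomial.map_C]
  have hψg : ψ g = 0 := by
    by_contra hne
    have h1 : ψ (C (C d) * f) = ψ ((C (C c) - C X * X) * g) := congrArg ψ hg
    rw [map_mul, map_mul, hψCCd, zero_mul, hψw] at h1
    exact hyp_regular (q c) hne h1.symm
  have hker : g ∈ RingHom.ker ψ := hψg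
  rw [hψ, Polynomial.ker_mapRingHom, Polynomial.ker_mapRingHom, Ideal.mk_ker] at hker
  have hm1 : Ideal.map (Polynomial.C : D →+* Polynomial D) (Ideal.span {d}) =
      Ideal.span {Polynomial.C d} := by
    rw [Ideal.map_span, Set.image_singleton]
  rw [hm1] at hker
  have hm2 : Ideal.map (Polynomial.C : Polynomial D →+* Polynomial (Polynomial D))
      (Ideal.span {Polynomial.C d}) = Ideal.span {C (C d)} := by
    rw [Ideal.map_span, Set.image_singleton]
  rw [hm2, Ideal.mem_span_singleton] at hker
  obtain ⟨h1, hh1⟩ := hker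
  refine ⟨h1, ?_⟩
  have key : C (C d) * (f - (C (C c) - C X * X) * h1) = 0 := by
    rw [mul_sub]
    rw [hh1] at hg
    rw [hg]; ring
  have hreg1 : ∀ y : Polynomial D, Polynomial.C d * y = 0 → y = 0 :=
    fun y hy => C_reg hd hy
  exact sub_eq_zero.mp (C_reg hreg1 key)

end Core


section Plumb
open MvPolynomial
variable {K : Type*} [Field K] {τ : Type*} [DecidableEq τ]

/-- Splitting a type at two distinct points. -/
def splitEquiv (a b : τ) (hab : a ≠ b) :
    τ ≃ Option (Option {p : τ // p ≠ a ∧ p ≠ b}) where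
  toFun p := if hb : p = b then none else if ha : p = a then some none
             else some (some ⟨p, ha, hb⟩)
  invFun o := o.elim b (fun o' => o'.elim a Subtype.val)
  left_inv p := by
    by_cases hb : p = b
    · simp [hb]
    · by_cases ha : p = a
      · subst ha; simp [hab, hb]
      · simp [ha, hb]
  right_inv o := by
    rcases o with _ | (_ | ⟨p, hpa, hpb⟩)
    · simp
    · simp [hab]
    · simp [hpa, hpb]

variable (K)

/-- The ring isomorphism S ≃ A[u][v]. -/
noncomputable def Φmap (a b : τ) (hab : a ≠ b) :
    MvPolynomial τ K ≃+*
      Polynomial (Polynomial (MvPolynomial {p : τ // p ≠ a ∧ p ≠ b} K)) :=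
  (MvPolynomial.renameEquiv K (splitEquiv a b hab)).toRingEquiv.trans
    ((MvPolynomial.optionEquivLeft K (Option {p : τ // p ≠ a ∧ p ≠ b})).toRingEquiv.trans
      (Polynomial.mapEquiv (MvPolynomial.optionEquivLeft K {p : τ // p ≠ a ∧ p ≠ b}).toRingEquiv))

lemma Φmap_X_b (a b : τ) (hab : a ≠ b) :
    Φmap K a b hab (X b) = Polynomial.X := by
  simp [Φmap, splitEquiv, MvPolynomial.optionEquivLeft_X_none, Polynomial.mapEquiv_apply]

lemma Φmap_X_a (a b : τ) (hab : a ≠ b) :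
    Φmap K a b hab (X a) = Polynomial.C Polynomial.X := by
  simp [Φmap, splitEquiv, hab, MvPolynomial.optionEquivLeft_X_some,
    MvPolynomial.optionEquivLeft_X_none, Polynomial.mapEquiv_apply]

lemma Φmap_X_other (a b : τ) (hab : a ≠ b) (r : τ) (hra : r ≠ a) (hrb : r ≠ b) :
    Φmap K a b hab (X r) = Polynomial.C (Polynomial.C (X ⟨r, hra, hrb⟩)) := by
  simp [Φmap, splitEquiv, hra, hrb, MvPolynomial.optionEquivLeft_X_some,
    Polynomial.mapEquiv_apply]

end Plumb

section Plumb2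
open MvPolynomial
variable {K : Type*} [Field K] {τ : Type*} [DecidableEq τ]
variable (K)

noncomputable def Jzero (a b : τ) (hab : a ≠ b) (W : Set (MvPolynomial τ K)) :
    Ideal (MvPolynomial {p : τ // p ≠ a ∧ p ≠ b} K) :=
  Ideal.span {x | Polynomial.C (Polynomial.C x) ∈ (Φmap K a b hab) '' W}

noncomputable def πmap (a b : τ) (hab : a ≠ b) (W : Set (MvPolynomial τ K)) :
    MvPolynomial τ K →+*
      Polynomial (Polynomial ((MvPolynomial {p : τ // p ≠ a ∧ p ≠ b} K) ⧸ Jzero K a b hab W)) :=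
  (Polynomial.mapRingHom (Polynomial.mapRingHom
    (Ideal.Quotient.mk (Jzero K a b hab W)))).comp (Φmap K a b hab).toRingHom

lemma πmap_surjective (a b : τ) (hab : a ≠ b) (W : Set (MvPolynomial τ K)) :
    Function.Surjective (πmap K a b hab W) :=
  ((Polynomial.map_surjective _ (Polynomial.map_surjective _
      Ideal.Quotient.mk_surjective))).comp (Φmap K a b hab).surjective

lemma πmap_apply (a b : τ) (hab : a ≠ b) (W : Set (MvPolynomial τ K)) (f : MvPolynomial τ K) :
    πmap K a b hab W f = Polynomial.map (Polynomial.mapRingHom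
      (Ideal.Quotient.mk (Jzero K a b hab W))) (Φmap K a b hab f) := rfl

lemma πmap_CC (a b : τ) (hab : a ≠ b) (W : Set (MvPolynomial τ K)) {f : MvPolynomial τ K}
    {x : MvPolynomial {p : τ // p ≠ a ∧ p ≠ b} K}
    (hx : Φmap K a b hab f = Polynomial.C (Polynomial.C x)) :
    πmap K a b hab W f =
      Polynomial.C (Polynomial.C (Ideal.Quotient.mk (Jzero K a b hab W) x)) := by
  rw [πmap_apply, hx, Polynomial.map_C, Polynomial.coe_mapRingHom, Polynomial.map_C]

lemma πmap_X_b (a b : τ) (hab : a ≠ b) (W : Set (MvPolynomial τ K)) :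
    πmap K a b hab W (X b) = Polynomial.X := by
  rw [πmap_apply, Φmap_X_b, Polynomial.map_X]

lemma πmap_X_a (a b : τ) (hab : a ≠ b) (W : Set (MvPolynomial τ K)) :
    πmap K a b hab W (X a) = Polynomial.C Polynomial.X := by
  rw [πmap_apply, Φmap_X_a, Polynomial.map_C, Polynomial.coe_mapRingHom, Polynomial.map_X]

lemma ker_πmap (a b : τ) (hab : a ≠ b) (W : Set (MvPolynomial τ K))
    (hW : ∀ s ∈ W, ∃ x, Φmap K a b hab s = Polynomial.C (Polynomial.C x)) :
    RingHom.ker (πmap K a b hab W) = Ideal.span W := by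
  have himg : (fun x : MvPolynomial {p : τ // p ≠ a ∧ p ≠ b} K =>
      Polynomial.C (Polynomial.C x)) ''
        {x | Polynomial.C (Polynomial.C x) ∈ (Φmap K a b hab) '' W} =
      (Φmap K a b hab) '' W := by
    apply Set.Subset.antisymm
    · rintro _ ⟨x, hx, rfl⟩; exact hx
    · rintro y ⟨s, hs, rfl⟩
      obtain ⟨x, hx⟩ := hW s hs
      have hmem : Polynomial.C (Polynomial.C x) ∈ (Φmap K a b hab) '' W := by
        rw [← hx]; exact Set.mem_image_of_mem _ hs
      exact ⟨x, hmem, hx.symm⟩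
  ext f
  have h1 : f ∈ RingHom.ker (πmap K a b hab W) ↔
      Φmap K a b hab f ∈ RingHom.ker (Polynomial.mapRingHom (Polynomial.mapRingHom
        (Ideal.Quotient.mk (Jzero K a b hab W)))) := Iff.rfl
  rw [h1, Polynomial.ker_mapRingHom, Polynomial.ker_mapRingHom, Ideal.mk_ker]
  rw [Jzero, Ideal.map_span, Ideal.map_span, ← Set.image_comp]
  rw [show ((⇑(Polynomial.C : Polynomial (MvPolynomial {p : τ // p ≠ a ∧ p ≠ b} K) →+* _)) ∘
      (⇑(Polynomial.C : MvPolynomial {p : τ // p ≠ a ∧ p ≠ b} K →+* _))) ''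
      {x | Polynomial.C (Polynomial.C x) ∈ (Φmap K a b hab) '' W} =
      (Φmap K a b hab) '' W from himg]
  constructor
  · intro h
    have h' : (Φmap K a b hab) f ∈
        Ideal.map ((Φmap K a b hab) : MvPolynomial τ K →+* _) (Ideal.span W) := by
      rw [Ideal.map_span]; exact h
    obtain ⟨x, hx, hxe⟩ := (Ideal.mem_map_iff_of_surjective _
      (Φmap K a b hab).surjective).mp h'
    rwa [← (Φmap K a b hab).injective hxe]
  · intro h
    have h' : (Φmap K a b hab) f ∈
        Ideal.map ((Φmap K a b hab) : MvPolynomial τ K →+* _) (Ideal.span W) :=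
      Ideal.mem_map_of_mem _ h
    rw [Ideal.map_span] at h'
    exact h'

end Plumb2


section Plumb3
open MvPolynomial
variable {K : Type*} [Field K] {τ : Type*} [DecidableEq τ]
variable (K)

lemma mem_union_span_iff (a b : τ) (hab : a ≠ b) (W : Set (MvPolynomial τ K))
    (hW : ∀ s ∈ W, ∃ x, Φmap K a b hab s = Polynomial.C (Polynomial.C x))
    (w : MvPolynomial τ K) (f : MvPolynomial τ K) :
    f ∈ Ideal.span (W ∪ {w}) ↔
      πmap K a b hab W f ∈ Ideal.span {πmap K a b hab W w} := by
  have hker : RingHom.ker (πmap K a b hab W) = Ideal.span W := ker_πmap K a b hab W hW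
  have hmap : Ideal.map (πmap K a b hab W) (Ideal.span (W ∪ {w})) =
      Ideal.span {πmap K a b hab W w} := by
    rw [Ideal.map_span, Set.image_union, Set.image_singleton]
    apply le_antisymm
    · rw [Ideal.span_le]
      rintro y (⟨s, hs, rfl⟩ | hy)
      · have hs0 : πmap K a b hab W s = 0 := by
          rw [← RingHom.mem_ker, hker]
          exact Ideal.subset_span hs
        rw [hs0]
        exact Ideal.zero_mem _
      · exact Ideal.subset_span hy
    · exact Ideal.span_mono Set.subset_union_right
  constructor
  · intro h
    have := Ideal.mem_map_of_mem (πmap K a b hab W) h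
    rwa [hmap] at this
  · intro h
    rw [← hmap] at h
    obtain ⟨x, hx, hxe⟩ := (Ideal.mem_map_iff_of_surjective _
      (πmap_surjective K a b hab W)).mp h
    have hfx : f - x ∈ Ideal.span W := by
      rw [← hker, RingHom.mem_ker, map_sub, hxe, sub_self]
    have : f = x + (f - x) := by ring
    rw [this]
    exact Ideal.add_mem _ hx (Ideal.span_mono Set.subset_union_left hfx)

theorem plumbB (a b : τ) (hab : a ≠ b) (W : Set (MvPolynomial τ K))
    (hW : ∀ s ∈ W, ∃ x, Φmap K a b hab s = Polynomial.C (Polynomial.C x))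
    (cS : MvPolynomial τ K)
    (hc1 : ∃ x, Φmap K a b hab cS = Polynomial.C (Polynomial.C x))
    (hcreg : ∀ f, cS * f ∈ Ideal.span W → f ∈ Ideal.span W) :
    ∀ f, X b * f ∈ Ideal.span (W ∪ {cS - X a * X b}) →
      f ∈ Ideal.span (W ∪ {cS - X a * X b}) := by
  obtain ⟨xc, hxc⟩ := hc1
  set π := πmap K a b hab W with hπdef
  set cbar := Ideal.Quotient.mk (Jzero K a b hab W) xc with hcbardef
  have hker : RingHom.ker π = Ideal.span W := ker_πmap K a b hab W hW
  have hπc : π cS = Polynomial.C (Polynomial.C cbar) := πmap_CC K a b hab W hxc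
  have hπw : π (cS - X a * X b) =
      Polynomial.C (Polynomial.C cbar) - Polynomial.C Polynomial.X * Polynomial.X := by
    rw [map_sub, map_mul, hπc, hπdef, πmap_X_a, πmap_X_b]
  have hcbar : ∀ y, cbar * y = 0 → y = 0 := by
    intro y hy
    obtain ⟨f, hf⟩ := πmap_surjective K a b hab W (Polynomial.C (Polynomial.C y))
    have h0 : π (cS * f) = 0 := by
      rw [map_mul, hπc, hf, ← map_mul, ← map_mul, hy, map_zero, map_zero]
    have h1 : cS * f ∈ Ideal.span W := by rw [← hker]; exact h0
    have h2 : f ∈ Ideal.span W := hcreg f h1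
    have h3 : π f = 0 := by rw [← RingHom.mem_ker, hker]; exact h2
    rw [hf] at h3
    exact Polynomial.C_eq_zero.mp (Polynomial.C_eq_zero.mp h3)
  intro f hf
  rw [mem_union_span_iff K a b hab W hW] at hf ⊢
  rw [← hπdef] at hf ⊢
  rw [map_mul, hπdef, πmap_X_b, ← hπdef] at hf
  rw [Ideal.mem_span_singleton'] at hf ⊢
  rw [hπw] at hf ⊢
  obtain ⟨g, hg⟩ := hf
  obtain ⟨g', hg'⟩ := core1 hcbar ⟨g, by rw [← hg, mul_comm]⟩
  exact ⟨g', by rw [hg', mul_comm]⟩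

theorem plumbD (a b : τ) (hab : a ≠ b) (W : Set (MvPolynomial τ K))
    (hW : ∀ s ∈ W, ∃ x, Φmap K a b hab s = Polynomial.C (Polynomial.C x))
    (cS : MvPolynomial τ K)
    (hc1 : ∃ x, Φmap K a b hab cS = Polynomial.C (Polynomial.C x))
    (dS : MvPolynomial τ K)
    (hd1 : ∃ x, Φmap K a b hab dS = Polynomial.C (Polynomial.C x))
    (hdreg : ∀ f, dS * f ∈ Ideal.span W → f ∈ Ideal.span W) :
    ∀ f, dS * f ∈ Ideal.span (W ∪ {cS - X a * X b}) →
      f ∈ Ideal.span (W ∪ {cS - X a * X b}) := by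
  obtain ⟨xc, hxc⟩ := hc1
  obtain ⟨xd, hxd⟩ := hd1
  set π := πmap K a b hab W with hπdef
  set cbar := Ideal.Quotient.mk (Jzero K a b hab W) xc with hcbardef
  set dbar := Ideal.Quotient.mk (Jzero K a b hab W) xd with hdbardef
  have hker : RingHom.ker π = Ideal.span W := ker_πmap K a b hab W hW
  have hπc : π cS = Polynomial.C (Polynomial.C cbar) := πmap_CC K a b hab W hxc
  have hπd : π dS = Polynomial.C (Polynomial.C dbar) := πmap_CC K a b hab W hxd
  have hπw : π (cS - X a * X b) =
      Polynomial.C (Polynomial.C cbar) - Polynomial.C Polynomial.X * Polynomial.X := by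
    rw [map_sub, map_mul, hπc, hπdef, πmap_X_a, πmap_X_b]
  have hdbar : ∀ y, dbar * y = 0 → y = 0 := by
    intro y hy
    obtain ⟨f, hf⟩ := πmap_surjective K a b hab W (Polynomial.C (Polynomial.C y))
    have h0 : π (dS * f) = 0 := by
      rw [map_mul, hπd, hf, ← map_mul, ← map_mul, hy, map_zero, map_zero]
    have h1 : dS * f ∈ Ideal.span W := by rw [← hker]; exact h0
    have h2 : f ∈ Ideal.span W := hdreg f h1
    have h3 : π f = 0 := by rw [← RingHom.mem_ker, hker]; exact h2
    rw [hf] at h3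
    exact Polynomial.C_eq_zero.mp (Polynomial.C_eq_zero.mp h3)
  intro f hf
  rw [mem_union_span_iff K a b hab W hW] at hf ⊢
  rw [← hπdef] at hf ⊢
  rw [map_mul, hπd] at hf
  rw [Ideal.mem_span_singleton'] at hf ⊢
  rw [hπw] at hf ⊢
  obtain ⟨g, hg⟩ := hf
  obtain ⟨g', hg'⟩ := core2 hdbar ⟨g, by rw [← hg, mul_comm]⟩
  exact ⟨g', by rw [hg', mul_comm]⟩

end Plumb3

open MvPolynomial

/-- The diagonal 2-minor `f_{ij} = x_{ii}x_{jj} - x_{ij}x_{ji}`. -/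
noncomputable def diagMinor (K : Type*) [Field K] (n : ℕ) (i j : Fin n) :
    MvPolynomial (Fin n × Fin n) K :=
  X (i, i) * X (j, j) - X (i, j) * X (j, i)

/-- The ideal `P_G` generated by the diagonal 2-minors of the edges of `G`. -/
noncomputable def diagIdeal (K : Type*) [Field K] (n : ℕ)
    (G : SimpleGraph (Fin n)) : Ideal (MvPolynomial (Fin n × Fin n) K) :=
  Ideal.span {f | ∃ i j : Fin n, G.Adj i j ∧ i < j ∧ f = diagMinor K n i j}

section Concrete
variable (K : Type*) [Field K] (n : ℕ)

private lemma fin_pair_ne {n : ℕ} {x y u v : Fin n}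
    (h : ¬(x.val = u.val ∧ y.val = v.val)) : ((x, y) : Fin n × Fin n) ≠ (u, v) := by
  intro hc
  rw [Prod.mk.injEq] at hc
  exact h ⟨congrArg Fin.val hc.1, congrArg Fin.val hc.2⟩

def mSet (E : Finset (Fin n × Fin n)) : Set (MvPolynomial (Fin n × Fin n) K) :=
  {f | ∃ p ∈ E, f = diagMinor K n p.1 p.2}

private lemma hW_gen (p : Fin n × Fin n) (hlt : p.1 < p.2) (a b : Fin n × Fin n)
    (hab : a ≠ b) (hs : ({a, b} : Set (Fin n × Fin n)) = {(p.1, p.2), (p.2, p.1)})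
    (E' : Finset (Fin n × Fin n)) (hE' : ∀ q ∈ E', q.1 < q.2) (hp : p ∉ E') :
    ∀ s ∈ mSet K n E', ∃ x, Φmap K a b hab s = Polynomial.C (Polynomial.C x) := by
  rintro s ⟨q, hqE, rfl⟩
  have hqlt : q.1 < q.2 := hE' q hqE
  have hqp : q ≠ p := by rintro rfl; exact hp hqE
  have hpv : p.1.val < p.2.val := hlt
  have hqv : q.1.val < q.2.val := hqlt
  have hqpv : ¬(q.1.val = p.1.val ∧ q.2.val = p.2.val) := by
    rintro ⟨h1, h2⟩
    exact hqp (Prod.ext (Fin.val_injective h1) (Fin.val_injective h2))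
  -- every variable of the minor of q differs from (p.1,p.2) and (p.2,p.1)
  have key : ∀ r : Fin n × Fin n,
      (r = (q.1, q.1) ∨ r = (q.2, q.2) ∨ r = (q.1, q.2) ∨ r = (q.2, q.1)) →
      r ≠ a ∧ r ≠ b := by
    intro r hr
    have hr1 : r ≠ (p.1, p.2) := by
      rcases hr with rfl | rfl | rfl | rfl <;> exact fin_pair_ne (by omega)
    have hr2 : r ≠ (p.2, p.1) := by
      rcases hr with rfl | rfl | rfl | rfl <;> exact fin_pair_ne (by omega)
    constructor
    · intro hc
      have : a ∈ ({a, b} : Set (Fin n × Fin n)) := by simp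
      rw [hs] at this
      rcases this with h | h
      · exact hr1 (hc.trans h)
      · exact hr2 (hc.trans h)
    · intro hc
      have : b ∈ ({a, b} : Set (Fin n × Fin n)) := by simp
      rw [hs] at this
      rcases this with h | h
      · exact hr1 (hc.trans h)
      · exact hr2 (hc.trans h)
  obtain ⟨h1a, h1b⟩ := key (q.1, q.1) (Or.inl rfl)
  obtain ⟨h2a, h2b⟩ := key (q.2, q.2) (Or.inr (Or.inl rfl))
  obtain ⟨h3a, h3b⟩ := key (q.1, q.2) (Or.inr (Or.inr (Or.inl rfl)))
  obtain ⟨h4a, h4b⟩ := key (q.2, q.1) (Or.inr (Or.inr (Or.inr rfl)))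
  refine ⟨X ⟨(q.1, q.1), h1a, h1b⟩ * X ⟨(q.2, q.2), h2a, h2b⟩ -
      X ⟨(q.1, q.2), h3a, h3b⟩ * X ⟨(q.2, q.1), h4a, h4b⟩, ?_⟩
  rw [diagMinor, map_sub, map_mul, map_mul,
    Φmap_X_other K a b hab _ h1a h1b, Φmap_X_other K a b hab _ h2a h2b,
    Φmap_X_other K a b hab _ h3a h3b, Φmap_X_other K a b hab _ h4a h4b]
  simp [map_sub, map_mul]

private lemma hXX_CC (a b : Fin n × Fin n) (hab : a ≠ b) (r1 r2 : Fin n × Fin n)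
    (h1a : r1 ≠ a) (h1b : r1 ≠ b) (h2a : r2 ≠ a) (h2b : r2 ≠ b) :
    ∃ x, Φmap K a b hab (X r1 * X r2) = Polynomial.C (Polynomial.C x) := by
  refine ⟨X ⟨r1, h1a, h1b⟩ * X ⟨r2, h2a, h2b⟩, ?_⟩
  rw [map_mul, Φmap_X_other K a b hab _ h1a h1b, Φmap_X_other K a b hab _ h2a h2b]
  simp [map_mul]

private lemma hX_CC (a b : Fin n × Fin n) (hab : a ≠ b) (r : Fin n × Fin n)
    (h1 : r ≠ a) (h2 : r ≠ b) :
    ∃ x, Φmap K a b hab (X r) = Polynomial.C (Polynomial.C x) :=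
  ⟨X ⟨r, h1, h2⟩, Φmap_X_other K a b hab _ h1 h2⟩

theorem lemA (E : Finset (Fin n × Fin n)) :
    (∀ p ∈ E, p.1 < p.2) → ∀ (d : Fin n) (f : MvPolynomial (Fin n × Fin n) K),
      X (d, d) * f ∈ Ideal.span (mSet K n E) → f ∈ Ideal.span (mSet K n E) := by
  induction E using Finset.induction_on with
  | empty =>
    intro _ d f hf
    rw [show mSet K n (∅ : Finset (Fin n × Fin n)) = ∅ from by simp [mSet],
      Ideal.span_empty, Ideal.mem_bot] at hf ⊢
    rcases mul_eq_zero.mp hf with h | h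
    · exact absurd h (MvPolynomial.X_ne_zero _)
    · exact h
  | @insert p E' hp IH =>
    intro hE d f hf
    have hlt : p.1 < p.2 := hE p (Finset.mem_insert_self p E')
    have hE' : ∀ q ∈ E', q.1 < q.2 := fun q hq => hE q (Finset.mem_insert_of_mem hq)
    have hpv : p.1.val < p.2.val := hlt
    have hab : ((p.1, p.2) : Fin n × Fin n) ≠ (p.2, p.1) := fin_pair_ne (by omega)
    have hW := hW_gen K n p hlt (p.1, p.2) (p.2, p.1) hab rfl E' hE' hp
    have hc1 := hXX_CC K n (p.1, p.2) (p.2, p.1) hab (p.1, p.1) (p.2, p.2)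
      (fin_pair_ne (by omega)) (fin_pair_ne (by omega))
      (fin_pair_ne (by omega)) (fin_pair_ne (by omega))
    have hd1 := hX_CC K n (p.1, p.2) (p.2, p.1) hab (d, d)
      (fin_pair_ne (by omega)) (fin_pair_ne (by omega))
    have hset : mSet K n (insert p E') = mSet K n E' ∪
        {X (p.1, p.1) * X (p.2, p.2) - X (p.1, p.2) * X (p.2, p.1)} := by
      ext g
      constructor
      · rintro ⟨q, hq, rfl⟩
        rcases Finset.mem_insert.mp hq with rfl | hq'
        · right; rw [diagMinor]; rfl
        · left; exact ⟨q, hq', rfl⟩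
      · rintro (⟨q, hq, rfl⟩ | hg)
        · exact ⟨q, Finset.mem_insert_of_mem hq, rfl⟩
        · refine ⟨p, Finset.mem_insert_self p E', ?_⟩
          rw [diagMinor]
          exact hg
    rw [hset] at hf ⊢
    exact plumbD K (p.1, p.2) (p.2, p.1) hab (mSet K n E') hW
      (X (p.1, p.1) * X (p.2, p.2)) hc1 (X (d, d)) hd1 (IH hE' d) f hf

theorem lemB (E : Finset (Fin n × Fin n)) (hE : ∀ p ∈ E, p.1 < p.2)
    (p : Fin n × Fin n) (hpE : p ∈ E) :
    ∀ f, X (p.2, p.1) * f ∈ Ideal.span (mSet K n E) → f ∈ Ideal.span (mSet K n E) := by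
  classical
  have hlt : p.1 < p.2 := hE p hpE
  have hp : p ∉ E.erase p := Finset.notMem_erase p E
  have hE' : ∀ q ∈ E.erase p, q.1 < q.2 := fun q hq => hE q (Finset.mem_of_mem_erase hq)
  have hins : insert p (E.erase p) = E := Finset.insert_erase hpE
  have hpv : p.1.val < p.2.val := hlt
  have hab : ((p.1, p.2) : Fin n × Fin n) ≠ (p.2, p.1) := fin_pair_ne (by omega)
  have hW := hW_gen K n p hlt (p.1, p.2) (p.2, p.1) hab rfl (E.erase p) hE' hp
  have hc1 := hXX_CC K n (p.1, p.2) (p.2, p.1) hab (p.1, p.1) (p.2, p.2)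
    (fin_pair_ne (by omega)) (fin_pair_ne (by omega))
    (fin_pair_ne (by omega)) (fin_pair_ne (by omega))
  have hcreg : ∀ f, X (p.1, p.1) * X (p.2, p.2) * f ∈ Ideal.span (mSet K n (E.erase p)) →
      f ∈ Ideal.span (mSet K n (E.erase p)) := by
    intro f hf
    rw [mul_assoc] at hf
    exact lemA K n (E.erase p) hE' p.2 f (lemA K n (E.erase p) hE' p.1 _ hf)
  have hset : mSet K n (insert p (E.erase p)) = mSet K n (E.erase p) ∪
      {X (p.1, p.1) * X (p.2, p.2) - X (p.1, p.2) * X (p.2, p.1)} := by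
    ext g
    constructor
    · rintro ⟨q, hq, rfl⟩
      rcases Finset.mem_insert.mp hq with rfl | hq'
      · right; rw [diagMinor]; rfl
      · left; exact ⟨q, hq', rfl⟩
    · rintro (⟨q, hq, rfl⟩ | hg)
      · exact ⟨q, Finset.mem_insert_of_mem hq, rfl⟩
      · refine ⟨p, Finset.mem_insert_self p (E.erase p), ?_⟩
        rw [diagMinor]
        exact hg
  intro f hf
  rw [← hins, hset] at hf ⊢
  exact plumbB K (p.1, p.2) (p.2, p.1) hab (mSet K n (E.erase p)) hW
    (X (p.1, p.1) * X (p.2, p.2)) hc1 hcreg f hf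

theorem lemB' (E : Finset (Fin n × Fin n)) (hE : ∀ p ∈ E, p.1 < p.2)
    (p : Fin n × Fin n) (hpE : p ∈ E) :
    ∀ f, X (p.1, p.2) * f ∈ Ideal.span (mSet K n E) → f ∈ Ideal.span (mSet K n E) := by
  classical
  have hlt : p.1 < p.2 := hE p hpE
  have hp : p ∉ E.erase p := Finset.notMem_erase p E
  have hE' : ∀ q ∈ E.erase p, q.1 < q.2 := fun q hq => hE q (Finset.mem_of_mem_erase hq)
  have hins : insert p (E.erase p) = E := Finset.insert_erase hpE
  have hpv : p.1.val < p.2.val := hlt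
  have hab : ((p.2, p.1) : Fin n × Fin n) ≠ (p.1, p.2) := fin_pair_ne (by omega)
  have hW := hW_gen K n p hlt (p.2, p.1) (p.1, p.2) hab (by
    rw [Set.pair_comm]) (E.erase p) hE' hp
  have hc1 := hXX_CC K n (p.2, p.1) (p.1, p.2) hab (p.1, p.1) (p.2, p.2)
    (fin_pair_ne (by omega)) (fin_pair_ne (by omega))
    (fin_pair_ne (by omega)) (fin_pair_ne (by omega))
  have hcreg : ∀ f, X (p.1, p.1) * X (p.2, p.2) * f ∈ Ideal.span (mSet K n (E.erase p)) →
      f ∈ Ideal.span (mSet K n (E.erase p)) := by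
    intro f hf
    rw [mul_assoc] at hf
    exact lemA K n (E.erase p) hE' p.2 f (lemA K n (E.erase p) hE' p.1 _ hf)
  have hset : mSet K n (insert p (E.erase p)) = mSet K n (E.erase p) ∪
      {X (p.1, p.1) * X (p.2, p.2) - X (p.2, p.1) * X (p.1, p.2)} := by
    ext g
    constructor
    · rintro ⟨q, hq, rfl⟩
      rcases Finset.mem_insert.mp hq with rfl | hq'
      · right
        show _ = _
        rw [diagMinor]
        ring
      · left; exact ⟨q, hq', rfl⟩
    · rintro (⟨q, hq, rfl⟩ | hg)
      · exact ⟨q, Finset.mem_insert_of_mem hq, rfl⟩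
      · refine ⟨p, Finset.mem_insert_self p (E.erase p), ?_⟩
        rw [diagMinor]
        rw [Set.mem_singleton_iff] at hg
        rw [hg]
        ring
  intro f hf
  rw [← hins, hset] at hf ⊢
  exact plumbB K (p.2, p.1) (p.1, p.2) hab (mSet K n (E.erase p)) hW
    (X (p.1, p.1) * X (p.2, p.2)) hc1 hcreg f hf

end Concrete

theorem stmt13 (K : Type*) [Field K] (n : ℕ) (G : SimpleGraph (Fin n))
    (i j : Fin n) (hij : G.Adj i j) :
    Ideal.Quotient.mk (diagIdeal K n G) (X (j, i)) ∈
      nonZeroDivisors (MvPolynomial (Fin n × Fin n) K ⧸ diagIdeal K n G) := by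
  classical
  rw [mem_nonZeroDivisors_iff_right]
  intro z hz
  obtain ⟨f, rfl⟩ := Ideal.Quotient.mk_surjective z
  set EG : Finset (Fin n × Fin n) :=
    Finset.univ.filter (fun p => G.Adj p.1 p.2 ∧ p.1 < p.2) with hEG
  have hEGlt : ∀ p ∈ EG, p.1 < p.2 := by
    intro p hp
    exact ((Finset.mem_filter.mp hp).2).2
  have hId : diagIdeal K n G = Ideal.span (mSet K n EG) := by
    rw [diagIdeal]
    congr 1
    ext g
    constructor
    · rintro ⟨i', j', hadj, hlt, rfl⟩
      exact ⟨(i', j'), Finset.mem_filter.mpr ⟨Finset.mem_univ _, hadj, hlt⟩, rfl⟩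
    · rintro ⟨p, hp, rfl⟩
      obtain ⟨-, hadj, hlt⟩ := Finset.mem_filter.mp hp
      exact ⟨p.1, p.2, hadj, hlt, rfl⟩
  have hmem : X (j, i) * f ∈ Ideal.span (mSet K n EG) := by
    rw [← hId, ← Ideal.Quotient.eq_zero_iff_mem, map_mul, mul_comm]
    exact hz
  have hfI : f ∈ Ideal.span (mSet K n EG) := by
    rcases lt_or_gt_of_ne hij.ne with hlt | hgt
    · have hpEG : ((i, j) : Fin n × Fin n) ∈ EG :=
        Finset.mem_filter.mpr ⟨Finset.mem_univ _, hij, hlt⟩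
      exact lemB K n EG hEGlt (i, j) hpEG f hmem
    · have hpEG : ((j, i) : Fin n × Fin n) ∈ EG :=
        Finset.mem_filter.mpr ⟨Finset.mem_univ _, hij.symm, hgt⟩
      exact lemB' K n EG hEGlt (j, i) hpEG f hmem
  rw [Ideal.Quotient.eq_zero_iff_mem, hId]
  exact hfI
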